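/- arXiv:2401.07716 — 4 statements merged into one kernel-verified Lean document; each statement's English description precedes it below -/
import Mathlib

section
/- Let ρ and σ be d×d density matrices with Tr(ρ²) > 1 - 4ε, Tr(σ²) > 1 - 4ε, and Tr(ρσ) > 1 - 2ε, where 0 ≤ ε < 1/16. Let ψ be a unit eigenvector of ρ for its largest eigenvalue. Then ⟨ψ, σψ⟩ > 1 - 14ε. -/
open Matrix
open scoped ComplexOrder

lemma trace_vecMulVec_mul' {d : ℕ} (a b : Fin d → ℂ) (M : Matrix (Fin d) (Fin d) ℂ) :
    (vecMulVec a b * M).trace = b ⬝ᵥ (M *ᵥ a) := by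
  simp only [Matrix.trace, Matrix.diag, Matrix.mul_apply, vecMulVec_apply, dotProduct,
    Matrix.mulVec, Finset.mul_sum]
  rw [Finset.sum_comm]
  congr 1; ext j; congr 1; ext i; ring

lemma trace_eq_sum_eigenvalues' {d : ℕ} {A : Matrix (Fin d) (Fin d) ℂ} (hA : A.IsHermitian) :
    A.trace = ∑ i, (hA.eigenvalues i : ℂ) := by
  conv_lhs => rw [hA.spectral_theorem]
  rw [Unitary.conjStarAlgAut_apply, Matrix.trace_mul_comm, ← Matrix.mul_assoc, Unitary.coe_star_mul_self, one_mul,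
    Matrix.trace_diagonal]
  simp

lemma trace_conj_sq' {d : ℕ} (U D : Matrix (Fin d) (Fin d) ℂ) (hU : star U * U = 1) :
    ((U * D * star U) * (U * D * star U)).trace = (D * D).trace := by
  have key : U * D * star U * (U * D * star U) = U * (D * D) * star U := by
    simp only [← Matrix.mul_assoc]
    rw [Matrix.mul_assoc (U * D) (star U) U, hU, Matrix.mul_one, Matrix.mul_assoc U D D]
  rw [key, Matrix.trace_mul_comm, ← Matrix.mul_assoc, hU, one_mul]

lemma trace_sq_eq_sum_eigenvalues_sq' {d : ℕ} {A : Matrix (Fin d) (Fin d) ℂ}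
    (hA : A.IsHermitian) :
    (A * A).trace = ∑ i, ((hA.eigenvalues i : ℂ) * (hA.eigenvalues i : ℂ)) := by
  conv_lhs => rw [hA.spectral_theorem]
  rw [Unitary.conjStarAlgAut_apply, trace_conj_sq' _ _ (Unitary.coe_star_mul_self _), Matrix.diagonal_mul_diagonal,
    Matrix.trace_diagonal]
  simp

open scoped MatrixOrder in
lemma trace_mul_psd_nonneg' {d : ℕ} {A B : Matrix (Fin d) (Fin d) ℂ}
    (hA : A.PosSemidef) (hB : B.PosSemidef) : 0 ≤ ((A * B).trace).re := by
  have hS := (CFC.sqrt_nonneg A).posSemidef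
  have h1 : A * B = CFC.sqrt A * (CFC.sqrt A * B) := by rw [← Matrix.mul_assoc, CFC.sqrt_mul_sqrt_self A hA.nonneg]
  have h2 : ((CFC.sqrt A * B) * CFC.sqrt A).PosSemidef := by
    have := hB.mul_mul_conjTranspose_same (CFC.sqrt A)
    rwa [hS.isHermitian.eq] at this
  rw [h1, Matrix.trace_mul_comm, Matrix.trace, Complex.re_sum]
  apply Finset.sum_nonneg
  intro i _
  have := h2.re_dotProduct_nonneg (Pi.single i 1)
  simpa [Matrix.mulVec_single, dotProduct, Pi.single_apply] using this

lemma one_sub_psd' {d : ℕ} {σ : Matrix (Fin d) (Fin d) ℂ} (hσ : σ.PosSemidef)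
    (hσ1 : σ.trace = 1) : (1 - σ).PosSemidef := by
  have hsum : ∑ i, hσ.1.eigenvalues i = 1 := by
    have := trace_eq_sum_eigenvalues' hσ.1
    rw [hσ1] at this
    exact_mod_cast this.symm
  have hle : ∀ i, hσ.1.eigenvalues i ≤ 1 := by
    intro i
    rw [← hsum]
    exact Finset.single_le_sum (f := hσ.1.eigenvalues) (fun j _ => hσ.eigenvalues_nonneg j)
      (Finset.mem_univ i)
  have hD : (Matrix.diagonal (fun i => (1 : ℂ) - (hσ.1.eigenvalues i : ℂ))).PosSemidef := by
    apply Matrix.PosSemidef.diagonal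
    intro i
    show (0 : ℂ) ≤ 1 - (hσ.1.eigenvalues i : ℂ)
    rw [show (1 : ℂ) - (hσ.1.eigenvalues i : ℂ) = ((1 - hσ.1.eigenvalues i : ℝ) : ℂ) by
      push_cast; ring]
    rw [Complex.zero_le_real]
    linarith [hle i]
  have key : 1 - σ = (hσ.1.eigenvectorUnitary : Matrix (Fin d) (Fin d) ℂ) *
      (Matrix.diagonal (fun i => (1 : ℂ) - (hσ.1.eigenvalues i : ℂ))) *
      (star (hσ.1.eigenvectorUnitary : Matrix (Fin d) (Fin d) ℂ)) := by
    have hdiag : (Matrix.diagonal (fun i => (1 : ℂ) - (hσ.1.eigenvalues i : ℂ)))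
        = 1 - Matrix.diagonal (RCLike.ofReal ∘ hσ.1.eigenvalues) := by
      rw [← Matrix.diagonal_one, Matrix.diagonal_sub]
      rfl
    rw [hdiag, Matrix.mul_sub, Matrix.mul_one, Matrix.sub_mul,
      Matrix.mem_unitaryGroup_iff.mp (hσ.1.eigenvectorUnitary).2, ← Unitary.conjStarAlgAut_apply (S := ℂ), ← hσ.1.spectral_theorem]
  rw [key]
  have := hD.mul_mul_conjTranspose_same (hσ.1.eigenvectorUnitary : Matrix (Fin d) (Fin d) ℂ)
  simpa [← Matrix.star_eq_conjTranspose] using this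

theorem eigvec_overlap_of_close_states {d : ℕ}
    (ρ σ : Matrix (Fin d) (Fin d) ℂ)
    (hρ : ρ.PosSemidef) (hρ1 : ρ.trace = 1)
    (hσ : σ.PosSemidef) (hσ1 : σ.trace = 1)
    (ε : ℝ) (hε0 : 0 ≤ ε) (hε : ε < 1 / 16)
    (h1 : 1 - 4 * ε < ((ρ * ρ).trace).re)
    (h2 : 1 - 4 * ε < ((σ * σ).trace).re)
    (h3 : 1 - 2 * ε < ((ρ * σ).trace).re)
    (ψ : Fin d → ℂ) (hψ : star ψ ⬝ᵥ ψ = 1)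
    (p : ℝ) (heig : ρ.mulVec ψ = (p : ℂ) • ψ)
    (hmax : ∀ i, hρ.1.eigenvalues i ≤ p) :
    1 - 14 * ε < (star ψ ⬝ᵥ σ.mulVec ψ).re := by
  -- p is large
  have hsum1 : ∑ i, hρ.1.eigenvalues i = 1 := by
    have := trace_eq_sum_eigenvalues' hρ.1
    rw [hρ1] at this
    exact_mod_cast this.symm
  have hsq : ((ρ * ρ).trace).re = ∑ i, hρ.1.eigenvalues i * hρ.1.eigenvalues i := by
    rw [trace_sq_eq_sum_eigenvalues_sq' hρ.1, Complex.re_sum]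
    simp [← Complex.ofReal_mul]
  have hple : ∑ i, hρ.1.eigenvalues i * hρ.1.eigenvalues i ≤ p := by
    calc ∑ i, hρ.1.eigenvalues i * hρ.1.eigenvalues i
        ≤ ∑ i, p * hρ.1.eigenvalues i :=
          Finset.sum_le_sum fun i _ =>
            mul_le_mul_of_nonneg_right (hmax i) (hρ.eigenvalues_nonneg i)
      _ = p := by rw [← Finset.mul_sum, hsum1, mul_one]
  have hp : 1 - 4 * ε < p := by rw [hsq] at h1; linarith
  have hp34 : 3 / 4 < p := by linarith
  -- projector
  set P : Matrix (Fin d) (Fin d) ℂ := vecMulVec ψ (star ψ) with hPdef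
  have hPherm : Pᴴ = P := by
    ext i j
    simp [hPdef, Matrix.conjTranspose_apply, vecMulVec_apply, mul_comm]
  have hρP : ρ * P = (p : ℂ) • P := by
    ext i j
    have hi := congrFun heig i
    simp only [Matrix.mulVec, dotProduct, Pi.smul_apply, smul_eq_mul] at hi
    simp only [hPdef, Matrix.mul_apply, vecMulVec_apply, Matrix.smul_apply, smul_eq_mul]
    calc ∑ k, ρ i k * (ψ k * star ψ j) = (∑ k, ρ i k * ψ k) * star ψ j := by
          rw [Finset.sum_mul]; exact Finset.sum_congr rfl fun k _ => by ring
      _ = (p : ℂ) * (ψ i * star ψ j) := by rw [hi]; ring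
  have hPρ : P * ρ = (p : ℂ) • P := by
    have h := congrArg Matrix.conjTranspose hρP
    rw [Matrix.conjTranspose_mul, hPherm, hρ.1.eq, Matrix.conjTranspose_smul, hPherm] at h
    rwa [show star ((p : ℂ)) = (p : ℂ) by simp] at h
  have hPP : P * P = P := by
    ext i j
    have hd : ∑ k, star ψ k * ψ k = 1 := hψ
    simp only [hPdef, Matrix.mul_apply, vecMulVec_apply]
    calc ∑ k, ψ i * star ψ k * (ψ k * star ψ j)
        = (∑ k, star ψ k * ψ k) * (ψ i * star ψ j) := by
          rw [Finset.sum_mul]; exact Finset.sum_congr rfl fun k _ => by ring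
      _ = ψ i * star ψ j := by rw [hd, one_mul]
  have hQρQ : (1 - P) * ρ * (1 - P) = ρ - (p : ℂ) • P := by
    have e1 : (1 - P) * ρ = ρ - (p : ℂ) • P := by
      rw [Matrix.sub_mul, Matrix.one_mul, hPρ]
    rw [e1, Matrix.sub_mul, Matrix.mul_sub, Matrix.mul_one, hρP, Matrix.smul_mul,
      Matrix.mul_sub, Matrix.mul_one, hPP, sub_self, smul_zero, sub_zero]
  have hQpsd : ((1 - P) * ρ * (1 - P)).PosSemidef := by
    have h := hρ.mul_mul_conjTranspose_same (1 - P)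
    rwa [Matrix.conjTranspose_sub, Matrix.conjTranspose_one, hPherm] at h
  have htrP : P.trace = 1 := by
    have h : P.trace = ψ ⬝ᵥ star ψ := by
      simp [hPdef, Matrix.trace, Matrix.diag, vecMulVec_apply, dotProduct]
    rw [h, dotProduct_comm, hψ]
  have htrPσ : (P * σ).trace = star ψ ⬝ᵥ σ *ᵥ ψ := trace_vecMulVec_mul' ψ (star ψ) σ
  have hdec : (ρ * σ).trace
      = (p : ℂ) * (star ψ ⬝ᵥ σ *ᵥ ψ) + (((1 - P) * ρ * (1 - P)) * σ).trace := by
    rw [hQρQ, Matrix.sub_mul, Matrix.trace_sub, Matrix.smul_mul, Matrix.trace_smul, htrPσ]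
    simp only [smul_eq_mul]
    ring
  have hrem : ((((1 - P) * ρ * (1 - P)) * σ).trace).re ≤ 1 - p := by
    have hub := trace_mul_psd_nonneg' hQpsd (one_sub_psd' hσ hσ1)
    have hexp : ((1 - P) * ρ * (1 - P)) * (1 - σ)
        = ((1 - P) * ρ * (1 - P)) - ((1 - P) * ρ * (1 - P)) * σ := by
      rw [Matrix.mul_sub, Matrix.mul_one]
    have htrQ : (((1 - P) * ρ * (1 - P)).trace).re = 1 - p := by
      rw [hQρQ, Matrix.trace_sub, Matrix.trace_smul, htrP, hρ1]
      simp
    rw [hexp, Matrix.trace_sub, Complex.sub_re] at hub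
    linarith [hub, htrQ.le, htrQ.ge]
  have hre : ((ρ * σ).trace).re
      = p * (star ψ ⬝ᵥ σ *ᵥ ψ).re + ((((1 - P) * ρ * (1 - P)) * σ).trace).re := by
    rw [hdec, Complex.add_re, Complex.mul_re]
    simp
  have hps : p * (star ψ ⬝ᵥ σ *ᵥ ψ).re > p - 2 * ε := by
    rw [hre] at h3
    linarith
  have hgoal : (star ψ ⬝ᵥ σ *ᵥ ψ).re = (star ψ ⬝ᵥ σ.mulVec ψ).re := rfl
  rw [← hgoal]
  nlinarith [mul_nonneg hε0 (show (0 : ℝ) ≤ 14 * p - 2 by linarith), hps, hp34]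
end

section
/- For density matrices ρ and σ of ranks r_ρ and r_σ on a finite-dimensional Hilbert space, the trace distance T(ρ,σ) = (1/2)‖ρ-σ‖₁ and the squared Hilbert–Schmidt distance D_HS(ρ,σ) = Tr((ρ-σ)²) satisfy T(ρ,σ)² ≤ (r_ρ·r_σ)/(r_ρ+r_σ) · D_HS(ρ,σ). -/
open Matrix
open scoped ComplexOrder

/-- The positive semidefinite square root of a positive semidefinite matrix
(the definition `Matrix.PosSemidef.sqrt` of the older Mathlib). -/
noncomputable def posSemidefSqrt {n : Type*} [Fintype n] [DecidableEq n]
    {A : Matrix n n ℂ} (hA : A.PosSemidef) : Matrix n n ℂ :=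
  (hA.1.eigenvectorUnitary : Matrix n n ℂ) *
    diagonal ((fun x : ℝ => (x : ℂ)) ∘ Real.sqrt ∘ hA.1.eigenvalues) *
    (star hA.1.eigenvectorUnitary : Matrix n n ℂ)

/-- The trace norm `‖A‖₁ = Tr √(Aᴴ A)`. -/
noncomputable def traceNorm {n : Type*} [Fintype n] [DecidableEq n]
    (A : Matrix n n ℂ) : ℝ :=
  (posSemidefSqrt (Matrix.posSemidef_conjTranspose_mul_self A)).trace.re

/-- The trace distance `T(ρ,σ) = ‖ρ - σ‖₁ / 2`. -/
noncomputable def traceDist {n : Type*} [Fintype n] [DecidableEq n]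
    (ρ σ : Matrix n n ℂ) : ℝ :=
  traceNorm (ρ - σ) / 2

namespace TraceDistAux

variable {d : ℕ}

lemma real_smul_pi (r : ℝ) (v : Fin d → ℂ) : r • v = (r : ℂ) • v := by
  funext x; simp [Complex.real_smul]

lemma sum_dotProduct' {ι : Type*} (s : Finset ι) (f : ι → Fin d → ℂ) (w : Fin d → ℂ) :
    (∑ i ∈ s, f i) ⬝ᵥ w = ∑ i ∈ s, f i ⬝ᵥ w := by
  simp only [dotProduct, Finset.sum_apply, Finset.sum_mul]
  exact Finset.sum_comm

lemma dotProduct_sum' {ι : Type*} (s : Finset ι) (w : Fin d → ℂ) (f : ι → Fin d → ℂ) :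
    w ⬝ᵥ (∑ i ∈ s, f i) = ∑ i ∈ s, w ⬝ᵥ f i := by
  simp only [dotProduct, Finset.sum_apply, Finset.mul_sum]
  exact Finset.sum_comm

lemma ortho {Δ : Matrix (Fin d) (Fin d) ℂ} (hΔ : Δ.IsHermitian) (i j : Fin d) :
    star ⇑(hΔ.eigenvectorBasis i) ⬝ᵥ ⇑(hΔ.eigenvectorBasis j) = if i = j then 1 else 0 := by
  have h := hΔ.eigenvectorBasis.orthonormal
  rw [orthonormal_iff_ite] at h
  have h2 := h i j
  rw [EuclideanSpace.inner_eq_star_dotProduct, dotProduct_comm] at h2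
  exact h2

lemma card_le_rank {ρ Δ : Matrix (Fin d) (Fin d) ℂ} (hρ : ρ.PosSemidef)
    (hΔ : Δ.IsHermitian) (ε : ℝ)
    (hle : ∀ x : Fin d → ℂ, ε * (star x ⬝ᵥ Δ *ᵥ x).re ≤ (star x ⬝ᵥ ρ *ᵥ x).re) :
    (Finset.univ.filter fun i => 0 < ε * hΔ.eigenvalues i).card ≤ ρ.rank := by
  classical
  set P := Finset.univ.filter fun i => 0 < ε * hΔ.eigenvalues i with hPdef
  set w : Fin d → Fin d → ℂ := fun i => ⇑(hΔ.eigenvectorBasis i) with hw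
  have hmem : ∀ i : P, ρ *ᵥ w (i : Fin d) ∈ LinearMap.range ρ.mulVecLin :=
    fun i => ⟨w (i : Fin d), rfl⟩
  have hli : LinearIndependent ℂ
      (fun i : P => (⟨ρ *ᵥ w (i : Fin d), hmem i⟩ : LinearMap.range ρ.mulVecLin)) := by
    rw [Fintype.linearIndependent_iff]
    intro c hc
    have hc' : ∑ i : P, c i • (ρ *ᵥ w (i : Fin d)) = (0 : Fin d → ℂ) := by
      have := congrArg (Subtype.val) hc
      simpa using this
    set v : Fin d → ℂ := ∑ i : P, c i • w (i : Fin d) with hv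
    have hρv : ρ *ᵥ v = 0 := by
      rw [hv, show ρ *ᵥ (∑ i : P, c i • w (i : Fin d)) = ρ.mulVecLin (∑ i : P, c i • w (i : Fin d)) from rfl,
        map_sum]
      simpa [mulVecLin_apply] using hc'
    have hΔv : Δ *ᵥ v = ∑ i : P, (c i * (hΔ.eigenvalues (i : Fin d) : ℂ)) • w (i : Fin d) := by
      rw [hv, show Δ *ᵥ (∑ i : P, c i • w (i : Fin d)) = Δ.mulVecLin (∑ i : P, c i • w (i : Fin d)) from rfl,
        map_sum]
      refine Finset.sum_congr rfl fun i _ => ?_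
      rw [_root_.map_smul, mulVecLin_apply, hw]
      simp only
      rw [hΔ.mulVec_eigenvectorBasis, real_smul_pi, smul_smul]
    have hsv : star v = ∑ i : P, (starRingEnd ℂ) (c i) • star (w (i : Fin d)) := by
      rw [hv, star_sum]
      refine Finset.sum_congr rfl fun i _ => ?_
      rw [star_smul]
      rfl
    have hdot : star v ⬝ᵥ (Δ *ᵥ v)
        = ∑ i : P, ((starRingEnd ℂ) (c i) * (c i * (hΔ.eigenvalues (i : Fin d) : ℂ))) := by
      rw [hΔv, hsv, sum_dotProduct']
      refine Finset.sum_congr rfl fun i _ => ?_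
      rw [dotProduct_sum', Finset.sum_eq_single i]
      · rw [smul_dotProduct, dotProduct_smul, hw]
        simp only
        rw [ortho hΔ, if_pos rfl]
        simp [smul_eq_mul]
      · intro j _ hji
        rw [smul_dotProduct, dotProduct_smul, hw]
        simp only
        rw [ortho hΔ, if_neg (fun h => hji (Subtype.ext h.symm)), smul_zero, smul_zero]
      · intro h; exact absurd (Finset.mem_univ i) h
    have hre : (star v ⬝ᵥ (Δ *ᵥ v)).re
        = ∑ i : P, Complex.normSq (c i) * hΔ.eigenvalues (i : Fin d) := by
      rw [hdot, Complex.re_sum]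
      refine Finset.sum_congr rfl fun i _ => ?_
      have : (starRingEnd ℂ) (c i) * (c i * (hΔ.eigenvalues (i : Fin d) : ℂ))
          = ((Complex.normSq (c i) * hΔ.eigenvalues (i : Fin d) : ℝ) : ℂ) := by
        rw [Complex.ofReal_mul, ← Complex.mul_conj]
        ring
      rw [this, Complex.ofReal_re]
    have hzero : (star v ⬝ᵥ (ρ *ᵥ v)).re = 0 := by rw [hρv, dotProduct_zero]; rfl
    have hsum : ∑ i : P, Complex.normSq (c i) * (ε * hΔ.eigenvalues (i : Fin d)) ≤ 0 := by
      have h1 := hle v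
      rw [hre, hzero, Finset.mul_sum] at h1
      calc ∑ i : P, Complex.normSq (c i) * (ε * hΔ.eigenvalues (i : Fin d))
          = ∑ i : P, ε * (Complex.normSq (c i) * hΔ.eigenvalues (i : Fin d)) := by
            refine Finset.sum_congr rfl fun i _ => by ring
        _ ≤ 0 := h1
    have hterm : ∀ i : P, Complex.normSq (c i) * (ε * hΔ.eigenvalues (i : Fin d)) = 0 := by
      have hnn : ∀ i ∈ Finset.univ, (0:ℝ) ≤ Complex.normSq (c i) * (ε * hΔ.eigenvalues (i : Fin d)) := by
        intro i _
        have hi : 0 < ε * hΔ.eigenvalues (i : Fin d) := (Finset.mem_filter.mp i.2).2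
        exact mul_nonneg (Complex.normSq_nonneg _) hi.le
      have hs0 : ∑ i : P, Complex.normSq (c i) * (ε * hΔ.eigenvalues (i : Fin d)) = 0 :=
        le_antisymm hsum (Finset.sum_nonneg hnn)
      intro i
      exact (Finset.sum_eq_zero_iff_of_nonneg hnn).mp hs0 i (Finset.mem_univ i)
    intro i
    have hi : 0 < ε * hΔ.eigenvalues (i : Fin d) := (Finset.mem_filter.mp i.2).2
    have := hterm i
    have hns : Complex.normSq (c i) = 0 := by
      rcases mul_eq_zero.mp this with h | h
      · exact h
      · exact absurd h hi.ne'
    exact Complex.normSq_eq_zero.mp hns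
  have hcard := hli.fintype_card_le_finrank
  rwa [Fintype.card_coe] at hcard

lemma trace_conj_diag (U : Matrix.unitaryGroup (Fin d) ℂ) (g : Fin d → ℂ) :
    ((U : Matrix (Fin d) (Fin d) ℂ) * diagonal g * star (U : Matrix (Fin d) (Fin d) ℂ)).trace
      = ∑ i, g i := by
  rw [trace_mul_cycle, Unitary.coe_star_mul_self U, one_mul, trace_diagonal]

lemma conj_mul_conj (U : Matrix.unitaryGroup (Fin d) ℂ) (f g : Fin d → ℂ) :
    ((U : Matrix (Fin d) (Fin d) ℂ) * diagonal f * star (U : Matrix (Fin d) (Fin d) ℂ)) *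
      ((U : Matrix (Fin d) (Fin d) ℂ) * diagonal g * star (U : Matrix (Fin d) (Fin d) ℂ))
    = (U : Matrix (Fin d) (Fin d) ℂ) * diagonal (f * g) * star (U : Matrix (Fin d) (Fin d) ℂ) := by
  have h1 : star (U : Matrix (Fin d) (Fin d) ℂ) * (U : Matrix (Fin d) (Fin d) ℂ) = 1 :=
    Unitary.coe_star_mul_self U
  calc ((U : Matrix (Fin d) (Fin d) ℂ) * diagonal f * star (U : Matrix (Fin d) (Fin d) ℂ)) *
      ((U : Matrix (Fin d) (Fin d) ℂ) * diagonal g * star (U : Matrix (Fin d) (Fin d) ℂ))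
      = (U : Matrix (Fin d) (Fin d) ℂ) * diagonal f *
        ((star (U : Matrix (Fin d) (Fin d) ℂ) * (U : Matrix (Fin d) (Fin d) ℂ)) *
          diagonal g) * star (U : Matrix (Fin d) (Fin d) ℂ) := by
        simp only [mul_assoc]
    _ = (U : Matrix (Fin d) (Fin d) ℂ) * diagonal (f * g) * star (U : Matrix (Fin d) (Fin d) ℂ) := by
        rw [h1, one_mul, mul_assoc ((U : Matrix (Fin d) (Fin d) ℂ)), diagonal_mul_diagonal]
        rfl

lemma spectral' {Δ : Matrix (Fin d) (Fin d) ℂ} (hΔ : Δ.IsHermitian) :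
    Δ = (hΔ.eigenvectorUnitary : Matrix (Fin d) (Fin d) ℂ) *
        diagonal (fun i => (hΔ.eigenvalues i : ℂ)) *
        star (hΔ.eigenvectorUnitary : Matrix (Fin d) (Fin d) ℂ) :=
  hΔ.spectral_theorem

lemma hs_eq {Δ : Matrix (Fin d) (Fin d) ℂ} (hΔ : Δ.IsHermitian) :
    ((Δ * Δ).trace).re = ∑ i, hΔ.eigenvalues i ^ 2 := by
  conv_lhs => rw [spectral' hΔ, conj_mul_conj, trace_conj_diag]
  rw [Complex.re_sum]
  refine Finset.sum_congr rfl fun i _ => ?_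
  simp [pow_two]

lemma traceNorm_eq {Δ : Matrix (Fin d) (Fin d) ℂ} (hΔ : Δ.IsHermitian) :
    traceNorm Δ = ∑ i, |hΔ.eigenvalues i| := by
  set U := hΔ.eigenvectorUnitary with hU
  set B : Matrix (Fin d) (Fin d) ℂ :=
    (U : Matrix (Fin d) (Fin d) ℂ) * diagonal (fun i => Complex.ofReal |hΔ.eigenvalues i|) *
      star (U : Matrix (Fin d) (Fin d) ℂ) with hB
  have hBpsd : B.PosSemidef := by
    rw [hB, Matrix.star_eq_conjTranspose]
    exact Matrix.PosSemidef.mul_mul_conjTranspose_same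
      (Matrix.posSemidef_diagonal_iff.mpr fun i => Complex.zero_le_real.mpr (abs_nonneg _)) _
  have habs : (fun i => Complex.ofReal |hΔ.eigenvalues i|) * (fun i => Complex.ofReal |hΔ.eigenvalues i|)
      = (fun i => (hΔ.eigenvalues i : ℂ)) * (fun i => (hΔ.eigenvalues i : ℂ)) := by
    funext i
    simp only [Pi.mul_apply]
    rw [← Complex.ofReal_mul, ← Complex.ofReal_mul, abs_mul_abs_self]
  have hsq : B ^ 2 = Δᴴ * Δ := by
    rw [pow_two, hB, conj_mul_conj, habs, hΔ.eq]
    conv_rhs => rw [spectral' hΔ, conj_mul_conj]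
  have heq : B = posSemidefSqrt (Matrix.posSemidef_conjTranspose_mul_self Δ) := by
    have hH := (Matrix.posSemidef_conjTranspose_mul_self Δ).1
    have hsa : IsSelfAdjoint Δ := hΔ
    have e1 : posSemidefSqrt (Matrix.posSemidef_conjTranspose_mul_self Δ)
        = cfc Real.sqrt (Δᴴ * Δ) := by
      rw [hH.cfc_eq, IsHermitian.cfc, Unitary.conjStarAlgAut_apply]; rfl
    have e2 : B = cfc (fun x : ℝ => |x|) Δ := by
      rw [hΔ.cfc_eq, IsHermitian.cfc, Unitary.conjStarAlgAut_apply]; rfl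
    have e3 : Δᴴ * Δ = cfc (fun x : ℝ => x ^ 2) Δ := by
      rw [cfc_pow (fun x => x) 2 Δ (ha := hsa), cfc_id' ℝ Δ hsa, hΔ.eq, pow_two]
    rw [e1, e2, e3, ← cfc_comp Real.sqrt (fun x => x ^ 2) Δ hsa]
    congr 1
    funext x
    simp [Real.sqrt_sq_eq_abs]
  rw [traceNorm, ← heq, hB, trace_conj_diag, Complex.re_sum]
  simp

lemma trace_eq {Δ : Matrix (Fin d) (Fin d) ℂ} (hΔ : Δ.IsHermitian) :
    Δ.trace = ∑ i, (hΔ.eigenvalues i : ℂ) := by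
  conv_lhs => rw [spectral' hΔ, trace_conj_diag]

lemma final {d : ℕ} (lam : Fin d → ℝ) (R1 R2 : ℝ)
    (P N : Finset (Fin d)) (hPdef : ∀ i, i ∈ P ↔ 0 < lam i) (hNdef : ∀ i, i ∈ N ↔ lam i < 0)
    (hA : (P.card : ℝ) ≤ R1) (hB : (N.card : ℝ) ≤ R2) (hR1 : 0 ≤ R1) (hR2 : 0 ≤ R2)
    (h0 : ∑ i, lam i = 0) :
    ((∑ i, |lam i|) / 2) ^ 2 ≤ R1 * R2 / (R1 + R2) * ∑ i, lam i ^ 2 := by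
  classical
  set p := ∑ i ∈ P, lam i with hp
  set q := ∑ i ∈ N, (-lam i) with hq
  have hPf : P = Finset.univ.filter fun i => 0 < lam i := by
    ext i; simp [hPdef]
  have hNf : N = Finset.univ.filter fun i => lam i < 0 := by
    ext i; simp [hNdef]
  have habs : ∑ i, |lam i| = p + q := by
    rw [hp, hq, hPf, hNf, Finset.sum_filter, Finset.sum_filter, ← Finset.sum_add_distrib]
    refine Finset.sum_congr rfl fun i _ => ?_
    rcases lt_trichotomy (lam i) 0 with h | h | h
    · rw [if_neg (by linarith), if_pos h, abs_of_neg h]; ring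
    · simp [h]
    · rw [if_pos h, if_neg (by linarith), abs_of_pos h]; ring
  have hpq : p = q := by
    have h1 : ∑ i, lam i = p - q := by
      rw [hp, hq, hPf, hNf, Finset.sum_filter, Finset.sum_filter, ← Finset.sum_sub_distrib]
      refine Finset.sum_congr rfl fun i _ => ?_
      rcases lt_trichotomy (lam i) 0 with h | h | h
      · rw [if_neg (by linarith), if_pos h]; ring
      · simp [h]
      · rw [if_pos h, if_neg (by linarith)]; ring
    rw [h0] at h1
    linarith
  have hLHS : (∑ i, |lam i|) / 2 = p := by rw [habs, hpq]; ring
  rw [hLHS]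
  have hp0 : 0 ≤ p := by
    rw [hp]
    refine Finset.sum_nonneg fun i hi => ((hPdef i).mp hi).le
  have hcs1 : p ^ 2 ≤ (P.card : ℝ) * ∑ i ∈ P, lam i ^ 2 := sq_sum_le_card_mul_sum_sq
  have hcs2 : p ^ 2 ≤ (N.card : ℝ) * ∑ i ∈ N, lam i ^ 2 := by
    have := sq_sum_le_card_mul_sum_sq (s := N) (f := fun i => -lam i)
    rw [← hq] at this
    simpa [hpq, neg_pow] using this
  have hdisj : Disjoint P N := by
    rw [Finset.disjoint_left]
    intro i hiP hiN
    exact absurd ((hPdef i).mp hiP) (not_lt.mpr ((hNdef i).mp hiN).le)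
  have hsplit : ∑ i ∈ P, lam i ^ 2 + ∑ i ∈ N, lam i ^ 2 ≤ ∑ i, lam i ^ 2 := by
    rw [← Finset.sum_union hdisj]
    exact Finset.sum_le_sum_of_subset_of_nonneg (Finset.subset_univ _)
      fun i _ _ => sq_nonneg _
  have hS0 : (0:ℝ) ≤ ∑ i, lam i ^ 2 := Finset.sum_nonneg fun i _ => sq_nonneg _
  rcases eq_or_lt_of_le hp0 with h | hppos
  · rw [← h]
    have : (0:ℝ) ≤ R1 * R2 / (R1 + R2) := by positivity
    nlinarith
  · -- p > 0 : P and N nonempty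
    have hPne : P.Nonempty := by
      by_contra h
      rw [Finset.not_nonempty_iff_eq_empty] at h
      rw [hp, h, Finset.sum_empty] at hppos
      exact lt_irrefl _ hppos
    have hNne : N.Nonempty := by
      by_contra h
      rw [Finset.not_nonempty_iff_eq_empty] at h
      rw [hpq, hq, h, Finset.sum_empty] at hppos
      exact lt_irrefl _ hppos
    have ha1 : (1:ℝ) ≤ (P.card : ℝ) := by
      exact_mod_cast Finset.card_pos.mpr hPne
    have hb1 : (1:ℝ) ≤ (N.card : ℝ) := by
      exact_mod_cast Finset.card_pos.mpr hNne
    set a : ℝ := (P.card : ℝ)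
    set b : ℝ := (N.card : ℝ)
    set SP := ∑ i ∈ P, lam i ^ 2
    set SN := ∑ i ∈ N, lam i ^ 2
    have hSP0 : 0 ≤ SP := Finset.sum_nonneg fun i _ => sq_nonneg _
    have hSN0 : 0 ≤ SN := Finset.sum_nonneg fun i _ => sq_nonneg _
    have hab : 0 < a + b := by linarith
    have hR : 0 < R1 + R2 := by linarith
    have key : (a + b) * p ^ 2 ≤ a * b * (SP + SN) := by
      nlinarith [mul_le_mul_of_nonneg_left hcs1 (by linarith : (0:ℝ) ≤ b),
                 mul_le_mul_of_nonneg_left hcs2 (by linarith : (0:ℝ) ≤ a)]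
    have key2 : p ^ 2 ≤ a * b / (a + b) * (SP + SN) := by
      rw [div_mul_eq_mul_div, le_div_iff₀ hab]
      nlinarith [key]
    have mono : a * b / (a + b) ≤ R1 * R2 / (R1 + R2) := by
      rw [div_le_div_iff₀ hab hR]
      nlinarith [mul_le_mul_of_nonneg_left hB (mul_nonneg (by linarith : (0:ℝ) ≤ a) hR1),
                 mul_le_mul_of_nonneg_left hA (mul_nonneg (by linarith : (0:ℝ) ≤ b) hR2)]
    calc p ^ 2 ≤ a * b / (a + b) * (SP + SN) := key2
      _ ≤ a * b / (a + b) * ∑ i, lam i ^ 2 := by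
          apply mul_le_mul_of_nonneg_left hsplit (by positivity)
      _ ≤ R1 * R2 / (R1 + R2) * ∑ i, lam i ^ 2 := mul_le_mul_of_nonneg_right mono hS0


end TraceDistAux

theorem traceDist_sq_le_rank_mul_hs {d : ℕ}
    (ρ σ : Matrix (Fin d) (Fin d) ℂ)
    (hρ : ρ.PosSemidef) (hρ1 : ρ.trace = 1)
    (hσ : σ.PosSemidef) (hσ1 : σ.trace = 1) :
    (traceDist ρ σ) ^ 2 ≤
      ((ρ.rank : ℝ) * (σ.rank : ℝ) / ((ρ.rank : ℝ) + (σ.rank : ℝ))) *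
        (((ρ - σ) * (ρ - σ)).trace).re := by
  classical
  have hΔ : (ρ - σ).IsHermitian := hρ.1.sub hσ.1
  have htr0 : ∑ i, hΔ.eigenvalues i = 0 := by
    have h1 : (ρ - σ).trace = 0 := by rw [trace_sub, hρ1, hσ1, sub_self]
    have h2 := TraceDistAux.trace_eq hΔ
    rw [h1] at h2
    have h3 := congrArg Complex.re h2
    rw [Complex.re_sum] at h3
    simpa using h3.symm
  have hPcard := TraceDistAux.card_le_rank hρ hΔ 1 (by
    intro x
    have hσx := (Complex.nonneg_iff.mp (hσ.dotProduct_mulVec_nonneg x)).1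
    rw [one_mul, sub_mulVec, dotProduct_sub, Complex.sub_re]
    linarith)
  have hNcard := TraceDistAux.card_le_rank hσ hΔ (-1) (by
    intro x
    have hρx := (Complex.nonneg_iff.mp (hρ.dotProduct_mulVec_nonneg x)).1
    rw [sub_mulVec, dotProduct_sub, Complex.sub_re]
    linarith)
  have hfin := TraceDistAux.final hΔ.eigenvalues (ρ.rank : ℝ) (σ.rank : ℝ)
    (Finset.univ.filter fun i => 0 < (1:ℝ) * hΔ.eigenvalues i)
    (Finset.univ.filter fun i => 0 < (-1:ℝ) * hΔ.eigenvalues i)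
    (fun i => by simp) (fun i => by simp)
    (by exact_mod_cast hPcard) (by exact_mod_cast hNcard)
    (Nat.cast_nonneg _) (Nat.cast_nonneg _) htr0
  rw [traceDist, TraceDistAux.hs_eq hΔ, TraceDistAux.traceNorm_eq hΔ]
  exact hfin
end

section
/- Under the hypotheses of the preceding setup (Tr(Uρ_{AB}U†·(|0⟩⟨0|_A⊗I_B)) ≥ 1-ε with ρ* = Uρ_{AB}U†, ρ*_A = Tr_B ρ*, ρ*_B = Tr_A ρ*), the Hilbert–Schmidt distance satisfies Tr((ρ* - |0⟩⟨0|_A⊗ρ*_B)²) ≤ 4ε. -/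
open Matrix
open scoped Kronecker ComplexOrder

section Aux
variable {n : Type*} [Fintype n] [DecidableEq n] {M : Matrix n n ℂ}

lemma psd_diag_re_nonneg (hM : M.PosSemidef) (x : n) : 0 ≤ (M x x).re := by
  have := hM.re_dotProduct_nonneg (Pi.single x 1)
  simpa [mulVec_single, single_dotProduct, ← Pi.single_star] using this

lemma psd_quadratic (hM : M.PosSemidef) (x y : n) (t s : ℝ) :
    0 ≤ Complex.normSq (M x y) * (M x x).re * t^2 - 2*t*s*Complex.normSq (M x y)
      + (M y y).re * s^2 := by
  have h := hM.re_dotProduct_nonneg ((M x y * (t:ℂ)) • (Pi.single x 1 : n → ℂ) + (-(s:ℂ)) • (Pi.single y 1 : n → ℂ))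
  have hyx : M y x = starRingEnd ℂ (M x y) := by
    have := congrFun (congrFun hM.1 y) x
    simpa [conjTranspose_apply] using this.symm
  have hst : star (Pi.single x 1 : n → ℂ) = Pi.single x 1 := by
    rw [← Pi.single_star]; simp
  have hst' : star (Pi.single y 1 : n → ℂ) = Pi.single y 1 := by
    rw [← Pi.single_star]; simp
  simp only [star_add, star_smul, mulVec_add, mulVec_smul, mulVec_single,
    dotProduct_add, add_dotProduct, smul_dotProduct, dotProduct_smul, hst, hst',
    single_dotProduct, star_mul', RCLike.star_def, hyx, smul_eq_mul, mul_one,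
    MulOpposite.op_one, one_smul, Matrix.col_apply] at h
  have key : M x y * ↑t *
          ((starRingEnd ℂ) (M x y) * (starRingEnd ℂ) (t:ℂ) * (1 * M x x) +
            (starRingEnd ℂ) (-(s:ℂ)) * (1 * (starRingEnd ℂ) (M x y))) +
        -(s:ℂ) * ((starRingEnd ℂ) (M x y) * (starRingEnd ℂ) (t:ℂ) * (1 * M x y) + (starRingEnd ℂ) (-(s:ℂ)) * (1 * M y y))
      = (↑(Complex.normSq (M x y)) * ↑t^2) * M x x
          - 2*↑t*↑s*↑(Complex.normSq (M x y)) + ↑s^2 * M y y := by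
    rw [← Complex.mul_conj]
    simp only [map_neg, Complex.conj_ofReal]
    ring
  rw [key] at h
  simp only [RCLike.re_to_complex, Complex.add_re, Complex.sub_re, Complex.mul_re,
    Complex.ofReal_re, Complex.ofReal_im, Complex.mul_im, Complex.re_ofNat,
    Complex.im_ofNat, pow_two] at h
  nlinarith [h]

/-- entrywise bound for PSD matrices -/
lemma psd_entry_sq (hM : M.PosSemidef) (x y : n) :
    Complex.normSq (M x y) ≤ (M x x).re * (M y y).re := by
  set A := (M x x).re with hA'
  set B := Complex.normSq (M x y) with hB'
  set C := (M y y).re with hC'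
  have hA : 0 ≤ A := psd_diag_re_nonneg hM x
  have hC : 0 ≤ C := psd_diag_re_nonneg hM y
  have hB : 0 ≤ B := Complex.normSq_nonneg _
  have h1 := psd_quadratic hM x y C B
  have h2 := psd_quadratic hM x y 1 (A+1)
  rcases eq_or_lt_of_le hB with hB0 | hB0
  · nlinarith [mul_nonneg hA hC]
  rcases eq_or_lt_of_le hC with hC0 | hC0
  · exfalso; nlinarith
  · by_contra hcon
    push_neg at hcon
    nlinarith [h1, mul_pos (mul_pos hC0 hB0) (show (0:ℝ) < B - A*C from by linarith)]
end Aux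

lemma posSemidef_finsetSum {n ι : Type*} [Fintype n] (s : Finset ι)
    (f : ι → Matrix n n ℂ) (h : ∀ i ∈ s, (f i).PosSemidef) :
    (∑ i ∈ s, f i).PosSemidef := by
  classical
  induction s using Finset.induction_on with
  | empty => simpa using Matrix.PosSemidef.zero
  | insert x s hx ih =>
    rw [Finset.sum_insert hx]
    exact ((h _ (Finset.mem_insert_self _ _)).add
      (ih fun i hi => h i (Finset.mem_insert_of_mem hi)))

noncomputable def ptraceA {a b : ℕ} (M : Matrix (Fin a × Fin b) (Fin a × Fin b) ℂ) :
    Matrix (Fin b) (Fin b) ℂ :=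
  Matrix.of fun i j => ∑ k : Fin a, M (k, i) (k, j)

theorem hs_dist_le_of_approx_disentangling {a b : ℕ} [NeZero a]
    (ρ : Matrix (Fin a × Fin b) (Fin a × Fin b) ℂ)
    (hρ : ρ.PosSemidef) (hρ1 : ρ.trace = 1)
    (U : Matrix (Fin a × Fin b) (Fin a × Fin b) ℂ)
    (hU : U ∈ Matrix.unitaryGroup (Fin a × Fin b) ℂ)
    (ε : ℝ)
    (hdis : 1 - ε ≤ (((U * ρ * Uᴴ) *
      ((Matrix.single (0 : Fin a) (0 : Fin a) (1 : ℂ)) ⊗ₖ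
        (1 : Matrix (Fin b) (Fin b) ℂ))).trace).re) :
    (((U * ρ * Uᴴ -
        (Matrix.single (0 : Fin a) (0 : Fin a) (1 : ℂ)) ⊗ₖ ptraceA (U * ρ * Uᴴ)) *
      (U * ρ * Uᴴ -
        (Matrix.single (0 : Fin a) (0 : Fin a) (1 : ℂ)) ⊗ₖ ptraceA (U * ρ * Uᴴ))).trace).re
      ≤ 4 * ε := by
  set σ : Matrix (Fin a × Fin b) (Fin a × Fin b) ℂ := U * ρ * Uᴴ with hσdef
  have hσ : σ.PosSemidef := hρ.mul_mul_conjTranspose_same U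
  -- trace of σ is 1
  have htrσ : σ.trace = 1 := by
    rw [hσdef, Matrix.trace_mul_cycle, ← Matrix.star_eq_conjTranspose,
      Matrix.mem_unitaryGroup_iff'.mp hU, one_mul, hρ1]
  -- the Hermitian difference matrix
  set E : Matrix (Fin a) (Fin a) ℂ := Matrix.single (0 : Fin a) (0 : Fin a) (1 : ℂ) with hEdef
  set D : Matrix (Fin a × Fin b) (Fin a × Fin b) ℂ := σ - E ⊗ₖ ptraceA σ with hDdef
  have hD : D.IsHermitian := by
    apply hσ.1.sub
    apply Matrix.IsHermitian.ext
    intro x y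
    simp only [conjTranspose_apply, kroneckerMap_apply, star_mul', ptraceA, of_apply, star_sum]
    congr 1
    · simp only [hEdef, Matrix.single, of_apply, apply_ite (star : ℂ → ℂ),
        star_one, star_zero]
      by_cases h1 : (0:Fin a) = x.1 <;> by_cases h2 : (0:Fin a) = y.1 <;>
        simp [h1, h2]
    · exact Finset.sum_congr rfl fun m _ => hσ.1.apply _ _
  -- rewrite the goal as a sum of squared norms
  have hgoal : ((D * D).trace).re = ∑ z : Fin a × Fin b, ∑ w : Fin a × Fin b,
      Complex.normSq (D z w) := by
    have hc : ∀ z w : Fin a × Fin b, D z w * D w z = (Complex.normSq (D z w) : ℂ) := by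
      intro z w
      rw [← hD.apply w z, Complex.star_def, Complex.mul_conj]
    simp only [Matrix.trace, Matrix.mul_apply, Matrix.diag, hc]
    simp
  rw [show ((U * ρ * Uᴴ - E ⊗ₖ ptraceA (U * ρ * Uᴴ)) *
      (U * ρ * Uᴴ - E ⊗ₖ ptraceA (U * ρ * Uᴴ))).trace.re = ((D * D).trace).re from rfl, hgoal]
  -- marginal weights
  set t : Fin a → ℝ := fun m => ∑ i : Fin b, (σ (m,i) (m,i)).re with htdef
  have ht : ∀ m, 0 ≤ t m := fun m => Finset.sum_nonneg fun i _ => psd_diag_re_nonneg hσ _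
  have hsum : ∑ m, t m = 1 := by
    have := congrArg Complex.re htrσ
    simpa [Matrix.trace, Matrix.diag, Fintype.sum_prod_type, Complex.re_sum, htdef] using this
  have ht0 : 1 - ε ≤ t 0 := by
    refine le_trans hdis (le_of_eq ?_)
    simp [Matrix.trace, Matrix.mul_apply, Matrix.diag, kroneckerMap_apply,
      Matrix.single, Matrix.one_apply, Fintype.sum_prod_type, ite_and,
      apply_ite Complex.re, Finset.sum_ite_eq, hEdef, htdef]
  set s' : ℝ := ∑ m ∈ Finset.univ.erase (0 : Fin a), t m with hs'def
  have hs'0 : 0 ≤ s' := Finset.sum_nonneg fun m _ => ht m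
  have hts' : t 0 + s' = 1 := by
    rw [hs'def, Finset.add_sum_erase _ t (Finset.mem_univ 0)]; exact hsum
  have hs'e : s' ≤ ε := by linarith
  have ht01 : t 0 ≤ 1 := by linarith
  -- off-diagonal-block entries of D
  have hDoff : ∀ (k l : Fin a) (i j : Fin b), ¬(k = 0 ∧ l = 0) →
      D (k,i) (l,j) = σ (k,i) (l,j) := by
    intro k l i j h
    have : E k l = 0 := by
      simp only [hEdef, Matrix.single, of_apply, ite_eq_right_iff, one_ne_zero]
      intro hc; exact absurd ⟨hc.1.symm, hc.2.symm⟩ h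
    simp [hDdef, kroneckerMap_apply, this]
  have hF : ∀ k l : Fin a, ¬(k = 0 ∧ l = 0) →
      (∑ i : Fin b, ∑ j : Fin b, Complex.normSq (D (k,i) (l,j))) ≤ t k * t l := by
    intro k l h
    calc (∑ i : Fin b, ∑ j : Fin b, Complex.normSq (D (k,i) (l,j)))
        ≤ ∑ i : Fin b, ∑ j : Fin b, (σ (k,i) (k,i)).re * (σ (l,j) (l,j)).re := by
          refine Finset.sum_le_sum fun i _ => Finset.sum_le_sum fun j _ => ?_
          rw [hDoff k l i j h]
          exact psd_entry_sq hσ _ _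
      _ = t k * t l := by rw [htdef]; rw [Finset.sum_mul_sum]
  -- the (0,0) block
  set R : Matrix (Fin b) (Fin b) ℂ :=
    ∑ m ∈ Finset.univ.erase (0:Fin a), σ.submatrix (fun i => (m,i)) (fun i => (m,i)) with hRdef
  have hR : R.PosSemidef :=
    posSemidef_finsetSum _ _ fun m _ => hσ.submatrix _
  have hRapp : ∀ i j, R i j = ∑ m ∈ Finset.univ.erase (0:Fin a), σ (m,i) (m,j) := by
    intro i j; simp [hRdef, Matrix.sum_apply]
  have hD00 : ∀ i j : Fin b, D (0,i) (0,j) = - R i j := by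
    intro i j
    have hE00 : E 0 0 = 1 := by simp [hEdef]
    have hpt : ptraceA σ i j = σ (0,i) (0,j) + ∑ m ∈ Finset.univ.erase (0:Fin a), σ (m,i) (m,j) := by
      rw [ptraceA, of_apply, ← Finset.add_sum_erase _ _ (Finset.mem_univ (0 : Fin a))]
    simp [hDdef, kroneckerMap_apply, hE00, hpt, hRapp]
  have hRdiag : ∑ i : Fin b, (R i i).re = s' := by
    rw [hs'def, htdef]
    simp only [hRapp, Complex.re_sum]
    exact Finset.sum_comm
  have hF00 : (∑ i : Fin b, ∑ j : Fin b, Complex.normSq (D (0,i) (0,j))) ≤ s' * s' := by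
    calc (∑ i : Fin b, ∑ j : Fin b, Complex.normSq (D (0,i) (0,j)))
        ≤ ∑ i : Fin b, ∑ j : Fin b, (R i i).re * (R j j).re := by
          refine Finset.sum_le_sum fun i _ => Finset.sum_le_sum fun j _ => ?_
          rw [hD00 i j, Complex.normSq_neg]
          exact psd_entry_sq hR _ _
      _ = s' * s' := by rw [← Finset.sum_mul_sum, hRdiag]
  -- reorganize the total sum
  have hsplit : (∑ z : Fin a × Fin b, ∑ w : Fin a × Fin b, Complex.normSq (D z w))
      = ∑ k : Fin a, ∑ l : Fin a, ∑ i : Fin b, ∑ j : Fin b, Complex.normSq (D (k,i) (l,j)) := by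
    simp only [Fintype.sum_prod_type]
    exact Finset.sum_congr rfl fun k _ => Finset.sum_comm
  rw [hsplit]
  set G : Fin a → Fin a → ℝ := fun k l => ∑ i : Fin b, ∑ j : Fin b, Complex.normSq (D (k,i) (l,j))
    with hGdef
  have h0row : ∑ l : Fin a, G 0 l ≤ s' * s' + t 0 * s' := by
    rw [← Finset.add_sum_erase _ _ (Finset.mem_univ (0 : Fin a))]
    refine add_le_add hF00 ?_
    calc ∑ l ∈ Finset.univ.erase (0:Fin a), G 0 l
        ≤ ∑ l ∈ Finset.univ.erase (0:Fin a), t 0 * t l := by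
          refine Finset.sum_le_sum fun l hl => ?_
          exact hF 0 l (fun hc => (Finset.mem_erase.mp hl).1 hc.2)
      _ = t 0 * s' := by rw [hs'def, Finset.mul_sum]
  have hrest : ∀ k ∈ Finset.univ.erase (0:Fin a), ∑ l : Fin a, G k l ≤ t k := by
    intro k hk
    calc ∑ l : Fin a, G k l ≤ ∑ l : Fin a, t k * t l := by
          refine Finset.sum_le_sum fun l _ => ?_
          exact hF k l (fun hc => (Finset.mem_erase.mp hk).1 hc.1)
      _ = t k := by rw [← Finset.mul_sum, hsum, mul_one]
  have htotal : (∑ k : Fin a, ∑ l : Fin a, G k l) ≤ s' * s' + t 0 * s' + s' := by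
    rw [← Finset.add_sum_erase _ _ (Finset.mem_univ (0 : Fin a))]
    have : ∑ k ∈ Finset.univ.erase (0:Fin a), ∑ l : Fin a, G k l
        ≤ ∑ k ∈ Finset.univ.erase (0:Fin a), t k := Finset.sum_le_sum hrest
    calc (∑ l : Fin a, G 0 l) + ∑ k ∈ Finset.univ.erase (0:Fin a), ∑ l : Fin a, G k l
        ≤ (s' * s' + t 0 * s') + s' := by
          refine add_le_add h0row (this.trans ?_)
          rw [hs'def]
      _ = s' * s' + t 0 * s' + s' := by ring
  refine le_trans htotal ?_
  nlinarith [hs'0, hs'e, hts', ht 0]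
end

section
/- Let ρ and σ be density matrices on (ℂ²)^{⊗n}, let S be the span of the union of the supports of ρ and σ, with k = dim S and r = 2^{⌈log₂ k⌉} ≤ 2^n. Then there exists a single unitary U on (ℂ²)^{⊗n} and density matrices ρ*_B, σ*_B on (ℂ²)^{⊗ log₂ r} such that UρU† = (|0⟩⟨0|)^{⊗(n-log₂ r)} ⊗ ρ*_B and UσU† = (|0⟩⟨0|)^{⊗(n-log₂ r)} ⊗ σ*_B. -/
open Matrix
open scoped Kronecker ComplexOrder InnerProductSpace

/-- The support of a matrix, i.e. the range of the associated linear map;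
for a density matrix this is the span of the eigenvectors with nonzero eigenvalue. -/
noncomputable def matSupport {d : ℕ} (ρ : Matrix (Fin d) (Fin d) ℂ) :
    Submodule ℂ (Fin d → ℂ) :=
  LinearMap.range ρ.mulVecLin


lemma exists_mapping_unitary {d : ℕ} (S : Submodule ℂ (Fin d → ℂ)) :
    ∃ U ∈ Matrix.unitaryGroup (Fin d) ℂ,
      ∀ x ∈ S, ∀ i : Fin d, Module.finrank ℂ S ≤ (i : ℕ) → (U *ᵥ x) i = 0 := by
  classical
  let E := EuclideanSpace ℂ (Fin d)
  let S' : Submodule ℂ E := S.map (WithLp.linearEquiv 2 ℂ (Fin d → ℂ)).symm.toLinearMap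
  set k := Module.finrank ℂ S' with hkdef
  have hrk : Module.finrank ℂ S = k := (LinearEquiv.finrank_map_eq _ _).symm
  have hEd : Module.finrank ℂ E = d := by simp [E, finrank_euclideanSpace]
  have hkd : k ≤ d := (Submodule.finrank_le S').trans_eq hEd
  let b0 : OrthonormalBasis (Fin k) ℂ S' := stdOrthonormalBasis ℂ S'
  let v : Fin d → E := fun i => if h : (i : ℕ) < k then (b0 ⟨(i : ℕ), h⟩ : E) else 0
  let s : Set (Fin d) := {i | (i : ℕ) < k}
  have hs : Orthonormal ℂ (s.restrict v) := by
    rw [orthonormal_iff_ite]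
    rintro ⟨i, hi⟩ ⟨j, hj⟩
    have hi' : (i : ℕ) < k := hi
    have hj' : (j : ℕ) < k := hj
    simp only [Set.restrict_apply, v, dif_pos hi', dif_pos hj']
    show ⟪(if h : (i : ℕ) < k then (b0 ⟨(i : ℕ), h⟩ : E) else 0), (if h : (j : ℕ) < k then (b0 ⟨(j : ℕ), h⟩ : E) else 0)⟫_ℂ = _
    rw [dif_pos hi', dif_pos hj']
    rw [← Submodule.coe_inner, orthonormal_iff_ite.mp b0.orthonormal]
    congr 1
    simp [Fin.ext_iff, Subtype.ext_iff]
  have hcard : Module.finrank ℂ E = Fintype.card (Fin d) := by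
    simp [E, finrank_euclideanSpace]
  obtain ⟨b, hb⟩ := hs.exists_orthonormalBasis_extension_of_card_eq hcard
  let U : Matrix (Fin d) (Fin d) ℂ := Matrix.of fun i j => star (b i j)
  have hinner : ∀ (y : E) (i : Fin d), (U *ᵥ (y : Fin d → ℂ)) i = ⟪b i, y⟫_ℂ := by
    intro y i
    simp [U, E, Matrix.mulVec, dotProduct, PiLp.inner_apply, RCLike.inner_apply]
    exact Finset.sum_congr rfl fun _ _ => mul_comm _ _
  have hUmem : U ∈ Matrix.unitaryGroup (Fin d) ℂ := by
    rw [Matrix.mem_unitaryGroup_iff]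
    ext i l
    rw [Matrix.star_eq_conjTranspose]
    have : (U * Uᴴ) i l = ⟪b i, b l⟫_ℂ := by
      simp [U, E, Matrix.mul_apply, Matrix.conjTranspose_apply, PiLp.inner_apply,
        RCLike.inner_apply]
      exact Finset.sum_congr rfl fun _ _ => mul_comm _ _
    rw [this, orthonormal_iff_ite.mp b.orthonormal, Matrix.one_apply]
  refine ⟨U, hUmem, ?_⟩
  intro x hx i hi
  rw [hrk] at hi
  have hx' : WithLp.toLp 2 x ∈ Submodule.span ℂ (Set.range fun l : Fin k => (b0 l : E)) := by
    have h1 : Submodule.span ℂ (Set.range fun l : Fin k => (b0 l : E)) = S' := by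
      have h2 := b0.toBasis.span_eq
      have h3 : (Set.range fun l : Fin k => (b0 l : E)) =
          S'.subtype '' Set.range b0.toBasis := by
        ext y
        simp [Set.range_comp, b0.coe_toBasis]
      rw [h3, ← Submodule.map_span, h2, Submodule.map_top, Submodule.range_subtype]
    rw [h1]; exact Submodule.mem_map_of_mem hx
  clear hx
  have key : ⟪b i, WithLp.toLp 2 x⟫_ℂ = 0 := by
    generalize WithLp.toLp 2 x = x' at hx' ⊢
    induction hx' using Submodule.span_induction with
    | mem y hy =>
      obtain ⟨l, rfl⟩ := hy
      show ⟪b i, (b0 l : E)⟫_ℂ = 0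
      have hl : ((⟨(l : ℕ), lt_of_lt_of_le l.2 hkd⟩ : Fin d)) ∈ s := l.2
      have : (b0 l : E) = b ⟨(l : ℕ), lt_of_lt_of_le l.2 hkd⟩ := by
        rw [hb _ hl]
        simp [v, l.2]
      rw [this, orthonormal_iff_ite.mp b.orthonormal, if_neg]
      intro h
      rw [h] at hi
      exact absurd l.2 (not_lt.mpr hi)
    | zero => simp
    | add y z _ _ hy hz => rw [inner_add_right, hy, hz, add_zero]
    | smul c y _ hy => rw [inner_smul_right, hy, mul_zero]
  rw [show x = WithLp.ofLp (WithLp.toLp 2 x) from rfl, hinner (WithLp.toLp 2 x) i, key]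


lemma block_extract {n m : ℕ} (hm : m ≤ n)
    (A : Matrix (Fin (2 ^ n)) (Fin (2 ^ n)) ℂ) (hA : A.PosSemidef)
    (h0 : ∀ i j : Fin (2 ^ n), 2 ^ m ≤ (i : ℕ) → A i j = 0) :
    ∃ B : Matrix (Fin (2 ^ m)) (Fin (2 ^ m)) ℂ, B.PosSemidef ∧ B.trace = A.trace ∧
      A = Matrix.reindex (finProdFinEquiv.trans (finCongr (pow_sub_mul_pow 2 hm)))
            (finProdFinEquiv.trans (finCongr (pow_sub_mul_pow 2 hm)))
            ((Matrix.single (0 : Fin (2 ^ (n - m))) (0 : Fin (2 ^ (n - m))) (1 : ℂ)) ⊗ₖ B) := by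
  classical
  set e : Fin (2 ^ (n - m)) × Fin (2 ^ m) ≃ Fin (2 ^ n) :=
    finProdFinEquiv.trans (finCongr (pow_sub_mul_pow 2 hm)) with he
  have hval : ∀ (a : Fin (2 ^ (n - m))) (b : Fin (2 ^ m)),
      ((e (a, b) : Fin (2 ^ n)) : ℕ) = (b : ℕ) + 2 ^ m * (a : ℕ) := by
    intro a b
    simp [he, finProdFinEquiv]
  have h0' : ∀ i j : Fin (2 ^ n), 2 ^ m ≤ (j : ℕ) → A i j = 0 := by
    intro i j hj
    rw [← hA.1.apply, h0 j i hj, star_zero]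
  let B : Matrix (Fin (2 ^ m)) (Fin (2 ^ m)) ℂ :=
    A.submatrix (fun b => e (0, b)) (fun b => e (0, b))
  have hrep : A = Matrix.reindex e e
      ((Matrix.single (0 : Fin (2 ^ (n - m))) (0 : Fin (2 ^ (n - m))) (1 : ℂ)) ⊗ₖ B) := by
    ext i j
    rw [Matrix.reindex_apply, Matrix.submatrix_apply]
    obtain ⟨⟨a, b⟩, rfl⟩ : ∃ p, e p = i := ⟨e.symm i, e.apply_symm_apply i⟩
    obtain ⟨⟨a', b'⟩, rfl⟩ : ∃ p, e p = j := ⟨e.symm j, e.apply_symm_apply j⟩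
    rw [Equiv.symm_apply_apply, Equiv.symm_apply_apply]
    rcases eq_or_ne a 0 with ha | ha
    · rcases eq_or_ne a' 0 with ha' | ha'
      · subst ha ha'
        simp [Matrix.kroneckerMap_apply, B, Matrix.single_apply_same]
      · have hz : A (e (a, b)) (e (a', b')) = 0 := h0' _ _ (by
          rw [hval]
          calc 2 ^ m = 2 ^ m * 1 := (mul_one _).symm
            _ ≤ 2 ^ m * (a' : ℕ) :=
              Nat.mul_le_mul_left _ (Nat.pos_of_ne_zero (fun h => ha' (Fin.ext h)))
            _ ≤ (b' : ℕ) + 2 ^ m * (a' : ℕ) := Nat.le_add_left _ _)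
        have hstd : Matrix.single (0 : Fin (2 ^ (n - m))) 0 (1 : ℂ) a a' = 0 :=
          by apply Matrix.single_apply_of_ne; exact fun h => ha' h.2.symm
        rw [hz]
        simp [Matrix.kroneckerMap_apply, hstd]
    · have hz : A (e (a, b)) (e (a', b')) = 0 := h0 _ _ (by
        rw [hval]
        calc 2 ^ m = 2 ^ m * 1 := (mul_one _).symm
          _ ≤ 2 ^ m * (a : ℕ) :=
            Nat.mul_le_mul_left _ (Nat.pos_of_ne_zero (fun h => ha (Fin.ext h)))
          _ ≤ (b : ℕ) + 2 ^ m * (a : ℕ) := Nat.le_add_left _ _)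
      have hstd : Matrix.single (0 : Fin (2 ^ (n - m))) 0 (1 : ℂ) a a' = 0 :=
        by apply Matrix.single_apply_of_ne; exact fun h => ha h.1.symm
      rw [hz]
      simp [Matrix.kroneckerMap_apply, hstd]
  have htr : B.trace = A.trace := by
    rw [hrep, Matrix.reindex_apply]
    have hsub : (((Matrix.single (0 : Fin (2 ^ (n - m))) 0 (1 : ℂ)) ⊗ₖ B).submatrix
        ⇑e.symm ⇑e.symm).trace =
        ((Matrix.single (0 : Fin (2 ^ (n - m))) 0 (1 : ℂ)) ⊗ₖ B).trace := by
      simp only [Matrix.trace, Matrix.diag, Matrix.submatrix_apply]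
      exact Fintype.sum_equiv e.symm _ _ (fun i => rfl)
    rw [hsub, Matrix.trace_kronecker, Matrix.trace_single_eq_same, one_mul]
  exact ⟨B, hA.submatrix _, htr, hrep⟩

theorem exists_joint_perfect_disentangling_unitary {n : ℕ}
    (ρ σ : Matrix (Fin (2 ^ n)) (Fin (2 ^ n)) ℂ)
    (hρ : ρ.PosSemidef) (hρ1 : ρ.trace = 1)
    (hσ : σ.PosSemidef) (hσ1 : σ.trace = 1)
    (k : ℕ) (hk : k = Module.finrank ℂ (matSupport ρ ⊔ matSupport σ : Submodule ℂ (Fin (2 ^ n) → ℂ)))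
    (hm : Nat.clog 2 k ≤ n) :
    ∃ U ∈ Matrix.unitaryGroup (Fin (2 ^ n)) ℂ,
      ∃ ρB σB : Matrix (Fin (2 ^ Nat.clog 2 k)) (Fin (2 ^ Nat.clog 2 k)) ℂ,
        ρB.PosSemidef ∧ ρB.trace = 1 ∧ σB.PosSemidef ∧ σB.trace = 1 ∧
        U * ρ * Uᴴ =
          Matrix.reindex
            (finProdFinEquiv.trans (finCongr (pow_sub_mul_pow 2 hm)))
            (finProdFinEquiv.trans (finCongr (pow_sub_mul_pow 2 hm)))
            ((Matrix.single (0 : Fin (2 ^ (n - Nat.clog 2 k)))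
                (0 : Fin (2 ^ (n - Nat.clog 2 k))) (1 : ℂ)) ⊗ₖ ρB) ∧
        U * σ * Uᴴ =
          Matrix.reindex
            (finProdFinEquiv.trans (finCongr (pow_sub_mul_pow 2 hm)))
            (finProdFinEquiv.trans (finCongr (pow_sub_mul_pow 2 hm)))
            ((Matrix.single (0 : Fin (2 ^ (n - Nat.clog 2 k)))
                (0 : Fin (2 ^ (n - Nat.clog 2 k))) (1 : ℂ)) ⊗ₖ σB) := by
  classical
  set S : Submodule ℂ (Fin (2 ^ n) → ℂ) := matSupport ρ ⊔ matSupport σ with hS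
  obtain ⟨U, hUmem, hUvan⟩ := exists_mapping_unitary S
  have hk2 : k ≤ 2 ^ Nat.clog 2 k := Nat.le_pow_clog (by norm_num) k
  have hUU : Uᴴ * U = 1 := by
    have := Matrix.mem_unitaryGroup_iff'.mp hUmem
    rwa [Matrix.star_eq_conjTranspose] at this
  have hmain : ∀ (X : Matrix (Fin (2 ^ n)) (Fin (2 ^ n)) ℂ), X.PosSemidef → X.trace = 1 →
      matSupport X ≤ S →
      ∃ B : Matrix (Fin (2 ^ Nat.clog 2 k)) (Fin (2 ^ Nat.clog 2 k)) ℂ,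
        B.PosSemidef ∧ B.trace = 1 ∧
        U * X * Uᴴ = Matrix.reindex
            (finProdFinEquiv.trans (finCongr (pow_sub_mul_pow 2 hm)))
            (finProdFinEquiv.trans (finCongr (pow_sub_mul_pow 2 hm)))
            ((Matrix.single (0 : Fin (2 ^ (n - Nat.clog 2 k)))
                (0 : Fin (2 ^ (n - Nat.clog 2 k))) (1 : ℂ)) ⊗ₖ B) := by
    intro X hX hX1 hXS
    have hA : (U * X * Uᴴ).PosSemidef := hX.mul_mul_conjTranspose_same U
    have htrA : (U * X * Uᴴ).trace = 1 := by
      rw [Matrix.trace_mul_cycle, hUU, Matrix.one_mul, hX1]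
    have h0 : ∀ i j : Fin (2 ^ n), 2 ^ Nat.clog 2 k ≤ (i : ℕ) → (U * X * Uᴴ) i j = 0 := by
      intro i j hi
      have hcol : (U * X * Uᴴ) i j = ((U * X * Uᴴ) *ᵥ Pi.single j 1) i := by
        simp [Matrix.mulVec_single]
      rw [hcol]
      have hdecomp : (U * X * Uᴴ) *ᵥ Pi.single j 1 =
          U *ᵥ (X *ᵥ (Uᴴ *ᵥ Pi.single j 1)) := by
        rw [Matrix.mulVec_mulVec, Matrix.mulVec_mulVec, Matrix.mul_assoc]
      rw [hdecomp]
      refine hUvan _ ?_ i ?_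
      · exact hXS ⟨Uᴴ *ᵥ Pi.single j 1, rfl⟩
      · rw [← hk]; exact le_trans hk2 hi
    obtain ⟨B, hB, hBtr, hBrep⟩ := block_extract hm (U * X * Uᴴ) hA h0
    exact ⟨B, hB, by rw [hBtr, htrA], hBrep⟩
  obtain ⟨ρB, h1, h2, h3⟩ := hmain ρ hρ hρ1 le_sup_left
  obtain ⟨σB, h4, h5, h6⟩ := hmain σ hσ hσ1 le_sup_right
  exact ⟨U, hUmem, ρB, σB, h1, h2, h4, h5, h3, h6⟩
end
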